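/- For every y ∈ ℝ, the function f(x) = cosh(x)²/cosh(x−y)² + cosh(x)²/cosh(x+y)² is monotone nondecreasing on [0,∞) (and strictly increasing there if y ≠ 0). -/

import Mathlib

open Real

private lemma hd8 (y x : ℝ) :
    HasDerivAt (fun x : ℝ => (Real.cosh x) ^ 2 / (Real.cosh (x - y)) ^ 2
        + (Real.cosh x) ^ 2 / (Real.cosh (x + y)) ^ 2)
      (2 * Real.cosh x * (Real.sinh y *
        (1 / (Real.cosh (x - y)) ^ 3 - 1 / (Real.cosh (x + y)) ^ 3))) x := by
  have c1 := Real.cosh_pos (x - y)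
  have c2 := Real.cosh_pos (x + y)
  have h1 : HasDerivAt (fun x : ℝ => Real.cosh x / Real.cosh (x - y))
      (Real.sinh y / (Real.cosh (x - y)) ^ 2) x := by
    have hden : HasDerivAt (fun x : ℝ => Real.cosh (x - y)) (Real.sinh (x - y)) x := by
      simpa [Function.comp_def] using (Real.hasDerivAt_cosh (x - y)).comp x
        ((hasDerivAt_id x).sub_const y)
    have := (Real.hasDerivAt_cosh x).div hden c1.ne'
    convert this using 1
    · rfl
    · rfl
    · rfl
    have : Real.sinh y = Real.sinh (x - (x - y)) := by norm_num
    rw [this, Real.sinh_sub]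
  have h2 : HasDerivAt (fun x : ℝ => Real.cosh x / Real.cosh (x + y))
      (-Real.sinh y / (Real.cosh (x + y)) ^ 2) x := by
    have hden : HasDerivAt (fun x : ℝ => Real.cosh (x + y)) (Real.sinh (x + y)) x := by
      simpa [Function.comp_def] using (Real.hasDerivAt_cosh (x + y)).comp x
        ((hasDerivAt_id x).add_const y)
    have := (Real.hasDerivAt_cosh x).div hden c2.ne'
    convert this using 1
    · rfl
    · rfl
    · rfl
    have : -Real.sinh y = Real.sinh (x - (x + y)) := by
      rw [show x - (x + y) = -y by ring, Real.sinh_neg]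
    rw [this, Real.sinh_sub]
  have h := ((h1.pow 2).add (h2.pow 2))
  have heq : (fun x : ℝ => (Real.cosh x / Real.cosh (x - y)) ^ 2
      + (Real.cosh x / Real.cosh (x + y)) ^ 2)
      = (fun x : ℝ => (Real.cosh x) ^ 2 / (Real.cosh (x - y)) ^ 2
        + (Real.cosh x) ^ 2 / (Real.cosh (x + y)) ^ 2) := by
    funext t; rw [div_pow, div_pow]
  simp only [Pi.pow_def, Pi.add_def] at h
  rw [heq] at h
  convert h using 1
  · rfl
  · rfl
  simp only [show (2:ℕ) - 1 = 1 from rfl, pow_one]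
  field_simp
  ring

private lemma key8 (y x : ℝ) (hx : 0 ≤ x) :
    0 ≤ Real.sinh y * (1 / (Real.cosh (x - y)) ^ 3 - 1 / (Real.cosh (x + y)) ^ 3) := by
  have c1 := Real.cosh_pos (x - y)
  have c2 := Real.cosh_pos (x + y)
  rcases le_total 0 y with hy | hy
  · apply mul_nonneg (Real.sinh_nonneg_iff.2 hy)
    have hle : Real.cosh (x - y) ≤ Real.cosh (x + y) := by
      rw [Real.cosh_le_cosh]
      calc |x - y| ≤ |x| + |y| := abs_sub _ _
        _ = x + y := by rw [abs_of_nonneg hx, abs_of_nonneg hy]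
        _ ≤ |x + y| := le_abs_self _
    have : (Real.cosh (x - y)) ^ 3 ≤ (Real.cosh (x + y)) ^ 3 :=
      pow_le_pow_left₀ c1.le hle 3
    have := one_div_le_one_div_of_le (by positivity) this
    linarith
  · have hs : Real.sinh y ≤ 0 := Real.sinh_nonpos_iff.2 hy
    have hle : Real.cosh (x + y) ≤ Real.cosh (x - y) := by
      rw [Real.cosh_le_cosh]
      calc |x + y| ≤ |x| + |y| := abs_add_le _ _
        _ = x - y := by rw [abs_of_nonneg hx, abs_of_nonpos hy]; ring
        _ ≤ |x - y| := le_abs_self _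
    have : (Real.cosh (x + y)) ^ 3 ≤ (Real.cosh (x - y)) ^ 3 :=
      pow_le_pow_left₀ c2.le hle 3
    have := one_div_le_one_div_of_le (by positivity) this
    nlinarith

private lemma key8' (y x : ℝ) (hx : 0 < x) (hy : y ≠ 0) :
    0 < Real.sinh y * (1 / (Real.cosh (x - y)) ^ 3 - 1 / (Real.cosh (x + y)) ^ 3) := by
  have c1 := Real.cosh_pos (x - y)
  have c2 := Real.cosh_pos (x + y)
  have habs : |x + y| < |x - y| ∨ |x - y| < |x + y| := by
    rcases lt_or_gt_of_ne hy with hy' | hy'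
    · left
      apply lt_of_pow_lt_pow_left₀ 2 (abs_nonneg _)
      rw [sq_abs, sq_abs]; nlinarith
    · right
      apply lt_of_pow_lt_pow_left₀ 2 (abs_nonneg _)
      rw [sq_abs, sq_abs]; nlinarith
  rcases lt_or_gt_of_ne hy with hy | hy
  · have hs : Real.sinh y < 0 := Real.sinh_neg_iff.2 hy
    have hlt : Real.cosh (x + y) < Real.cosh (x - y) := by
      rw [Real.cosh_lt_cosh]
      rcases habs with h | h
      · exact h
      · exfalso; nlinarith [sq_abs (x+y), sq_abs (x-y), abs_nonneg (x+y), abs_nonneg (x-y)]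
    have h3 : (Real.cosh (x + y)) ^ 3 < (Real.cosh (x - y)) ^ 3 :=
      pow_lt_pow_left₀ hlt c2.le (by norm_num)
    have := one_div_lt_one_div_of_lt (by positivity) h3
    nlinarith
  · have hs : 0 < Real.sinh y := Real.sinh_pos_iff.2 hy
    have hlt : Real.cosh (x - y) < Real.cosh (x + y) := by
      rw [Real.cosh_lt_cosh]
      rcases habs with h | h
      · exfalso; nlinarith [sq_abs (x+y), sq_abs (x-y), abs_nonneg (x+y), abs_nonneg (x-y)]
      · exact h
    have h3 : (Real.cosh (x - y)) ^ 3 < (Real.cosh (x + y)) ^ 3 :=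
      pow_lt_pow_left₀ hlt c1.le (by norm_num)
    have := one_div_lt_one_div_of_lt (by positivity) h3
    nlinarith

theorem stmt8 (y : ℝ) :
    MonotoneOn
      (fun x : ℝ => (Real.cosh x) ^ 2 / (Real.cosh (x - y)) ^ 2
        + (Real.cosh x) ^ 2 / (Real.cosh (x + y)) ^ 2) (Set.Ici (0:ℝ)) ∧
    (y ≠ 0 → StrictMonoOn
      (fun x : ℝ => (Real.cosh x) ^ 2 / (Real.cosh (x - y)) ^ 2
        + (Real.cosh x) ^ 2 / (Real.cosh (x + y)) ^ 2) (Set.Ici (0:ℝ))) := by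
  have hcont : ContinuousOn (fun x : ℝ => (Real.cosh x) ^ 2 / (Real.cosh (x - y)) ^ 2
        + (Real.cosh x) ^ 2 / (Real.cosh (x + y)) ^ 2) (Set.Ici (0:ℝ)) :=
    fun x _ => ((hd8 y x).differentiableAt.continuousAt).continuousWithinAt
  constructor
  · apply monotoneOn_of_deriv_nonneg (convex_Ici 0) hcont
    · exact fun x _ => (hd8 y x).differentiableAt.differentiableWithinAt
    · intro x hx
      rw [(hd8 y x).deriv]
      have := key8 y x (by simp [interior_Ici] at hx; linarith)
      have hc := (Real.cosh_pos x).le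
      positivity
  · intro hy
    apply strictMonoOn_of_deriv_pos (convex_Ici 0) hcont
    intro x hx
    rw [interior_Ici] at hx
    rw [(hd8 y x).deriv]
    have := key8' y x hx hy
    have hc := Real.cosh_pos x
    positivity
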